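/- Let R be a countable von Neumann regular ring that is not semisimple. Then every cotorsion right R-module is injective; consequently the classes of cotorsion, pure-injective, and injective right R-modules coincide. -/

import Mathlib

universe u

/-- `Ext¹_R(A, B) = 0`: every short exact sequence `0 → B → E → A → 0` splits. -/
def Ext1Zero (R : Type u) [Ring R] (A B : Type u)
    [AddCommGroup A] [Module R A] [AddCommGroup B] [Module R B] : Prop :=
  ∀ (E : Type u) [AddCommGroup E] [Module R E] (ι : B →ₗ[R] E) (π : E →ₗ[R] A),
    Function.Injective ι → Function.Surjective π →
      LinearMap.range ι = LinearMap.ker π →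
        ∃ s : A →ₗ[R] E, π ∘ₗ s = LinearMap.id

/-- Flatness of a left module over an arbitrary ring, via the equational criterion:
whenever `∑ i, r i • x i = 0`, the tuple `x` factors through a tuple `y` by a matrix
`a` with `∑ i, r i * a i j = 0`. -/
def FlatModule (R : Type u) [Ring R] (M : Type u)
    [AddCommGroup M] [Module R M] : Prop :=
  ∀ (n : ℕ) (r : Fin n → R) (x : Fin n → M), (∑ i, r i • x i) = 0 →
    ∃ (m : ℕ) (a : Fin n → Fin m → R) (y : Fin m → M),
      (∀ i, x i = ∑ j, a i j • y j) ∧ ∀ j, (∑ i, r i * a i j) = 0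

/-- A monomorphism `ν : N → M` is pure if for every finitely presented module `C`,
the induced map `Hom(C, M) → Hom(C, M / ν(N))` is surjective. -/
def IsPureMono (R : Type u) [Ring R] {N M : Type u}
    [AddCommGroup N] [Module R N] [AddCommGroup M] [Module R M]
    (ν : N →ₗ[R] M) : Prop :=
  ∀ (C : Type u) [AddCommGroup C] [Module R C], Module.FinitePresentation R C →
    ∀ h : C →ₗ[R] M ⧸ LinearMap.range ν,
      ∃ g : C →ₗ[R] M, (LinearMap.range ν).mkQ ∘ₗ g = h

/-- `L` is pure-injective: injective with respect to all pure monomorphisms. -/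
def PureInjective (R : Type u) [Ring R] (L : Type u)
    [AddCommGroup L] [Module R L] : Prop :=
  ∀ (N M : Type u) [AddCommGroup N] [Module R N] [AddCommGroup M] [Module R M]
    (ν : N →ₗ[R] M), Function.Injective ν → IsPureMono R ν →
      ∀ f : N →ₗ[R] L, ∃ g : M →ₗ[R] L, g ∘ₗ ν = f

/-- `M` is (Enochs) cotorsion: `Ext¹_R(F, M) = 0` for every flat module `F`. -/
def Cotorsion (R : Type u) [Ring R] (M : Type u)
    [AddCommGroup M] [Module R M] : Prop :=
  ∀ F : ModuleCat.{u} R, FlatModule R ↥F → Ext1Zero R ↥F M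


universe v w

section Aux
variable {R : Type u} [Ring R]


lemma vnr_unit (hvnr : ∀ a : R, ∃ x : R, a * x * a = a) :
    ∀ (n : ℕ) (r : Fin n → R), ∃ d : Fin n → R, ∀ k, (∑ i, r i * d i) * r k = r k := by
  intro n
  induction n with
  | zero => exact fun r => ⟨0, fun k => k.elim0⟩
  | succ n ih =>
    intro r
    obtain ⟨d', hd'⟩ := ih (fun i => r i.castSucc)
    set e := ∑ i, r i.castSucc * d' i with he
    set L := r (Fin.last n) with hL
    obtain ⟨v, hv⟩ := hvnr (L - e * L)
    set z := v * (1 - e) with hz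
    refine ⟨Fin.snoc (fun i => d' i - d' i * (L * z)) z, ?_⟩
    have hE : (∑ i, r i * (Fin.snoc (fun i => d' i - d' i * (L * z)) z : Fin (n+1) → R) i)
        = e + (L - e * L) * z := by
      rw [Fin.sum_univ_castSucc]
      simp only [Fin.snoc_castSucc, Fin.snoc_last]
      have h1 : ∑ i : Fin n, r i.castSucc * (d' i - d' i * (L * z))
          = e - e * (L * z) := by
        rw [Finset.sum_congr rfl (fun i _ => mul_sub (r i.castSucc) (d' i) (d' i * (L * z))),
          Finset.sum_sub_distrib, ← he]
        congr 1
        rw [Finset.sum_congr rfl (fun i _ => (mul_assoc (r i.castSucc) (d' i) (L * z)).symm),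
          ← Finset.sum_mul, ← he]
      rw [h1]
      noncomm_ring
    intro k
    rw [hE]
    refine Fin.lastCases ?_ ?_ k
    · -- k = last
      rw [← hL]
      have hzL : z * L = v * (L - e * L) := by rw [hz]; noncomm_ring
      calc (e + (L - e * L) * z) * L = e * L + (L - e * L) * (z * L) := by noncomm_ring
        _ = e * L + (L - e * L) * v * (L - e * L) := by rw [hzL, mul_assoc]
        _ = e * L + (L - e * L) := by rw [hv]
        _ = L := by noncomm_ring
    · intro k₀
      have h0 : (1 - e) * r k₀.castSucc = 0 := by
        rw [sub_mul, one_mul, hd' k₀, sub_self]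
      have hzr : z * r k₀.castSucc = 0 := by
        rw [hz, mul_assoc, h0, mul_zero]
      calc (e + (L - e * L) * z) * r k₀.castSucc
          = e * r k₀.castSucc + (L - e * L) * (z * r k₀.castSucc) := by noncomm_ring
        _ = r k₀.castSucc := by rw [hzr, mul_zero, add_zero, hd' k₀]

lemma vnr_unit' (hvnr : ∀ a : R, ∃ x : R, a * x * a = a) {κ : Type w} [Fintype κ]
    (y : κ → R) : ∃ c : κ → R, ∀ k, (∑ j, y j * c j) * y k = y k := by
  obtain ⟨d, hd⟩ := vnr_unit hvnr (Fintype.card κ) (y ∘ (Fintype.equivFin κ).symm)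
  refine ⟨d ∘ (Fintype.equivFin κ), fun k => ?_⟩
  have hs : ∑ j, y j * (d ∘ (Fintype.equivFin κ)) j
      = ∑ i, (y ∘ (Fintype.equivFin κ).symm) i * d i := by
    refine Fintype.sum_equiv (Fintype.equivFin κ) _ _ (fun j => ?_)
    simp [Function.comp]
  rw [hs]
  simpa using hd (Fintype.equivFin κ k)





/-- finite linear combination as a linear map -/
def combo {M : Type v} [AddCommGroup M] [Module R M] {α : Type w} [Fintype α]
    (v : α → M) : (α → R) →ₗ[R] M where
  toFun f := ∑ i, f i • v i
  map_add' f g := by simp [add_smul, Finset.sum_add_distrib]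
  map_smul' r f := by simp [mul_smul, Finset.smul_sum]

lemma combo_single {M : Type v} [AddCommGroup M] [Module R M] {α : Type w} [Fintype α]
    [DecidableEq α] (v : α → M) (i : α) : combo v (Pi.single i (1 : R)) = v i := by
  simp [combo, Pi.single_apply, ite_smul]

lemma range_combo {M : Type v} [AddCommGroup M] [Module R M] {α : Type w} [Fintype α]
    (v : α → M) : LinearMap.range (combo (R := R) v) = Submodule.span R (Set.range v) := by
  classical
  apply le_antisymm
  · rintro _ ⟨f, rfl⟩
    exact Submodule.sum_mem _ fun i _ =>
      Submodule.smul_mem _ _ (Submodule.subset_span ⟨i, rfl⟩)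
  · rw [Submodule.span_le]
    rintro _ ⟨i, rfl⟩
    exact ⟨Pi.single i 1, combo_single v i⟩

def optIncl (R : Type u) [Ring R] (ι : Type v) : (ι → R) →ₗ[R] (Option ι → R) where
  toFun v := fun o => o.elim 0 v
  map_add' a b := by funext o; cases o <;> simp
  map_smul' r a := by funext o; cases o <;> simp

def dotMap {κ : Type w} [Fintype κ] (c : κ → R) : (κ → R) →ₗ[R] R where
  toFun w := ∑ j, w j * c j
  map_add' a b := by simp [add_mul, Finset.sum_add_distrib]
  map_smul' r a := by simp [Finset.mul_sum, mul_assoc]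

def smulMap {A : Type v} {M : Type w} [AddCommGroup A] [Module R A] [AddCommGroup M]
    [Module R M] (t : A →ₗ[R] R) (x : M) : A →ₗ[R] M where
  toFun a := t a • x
  map_add' a b := by simp [add_smul]
  map_smul' r a := by simp [mul_smul]

lemma mapReg (hvnr : ∀ a : R, ∃ x : R, a * x * a = a) (ι : Type v) [Finite ι] :
    ∀ (κ : Type w) [Fintype κ] (f : (ι → R) →ₗ[R] (κ → R)),
      ∃ g : (κ → R) →ₗ[R] (ι → R), f ∘ₗ g ∘ₗ f = f := by
  induction ι using Finite.induction_empty_option with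
  | of_equiv e ih =>
    intro κ _ F
    set E := LinearEquiv.funCongrLeft R R e with hE
    obtain ⟨g₀, h₀⟩ := ih κ (F ∘ₗ (E.symm : _ →ₗ[R] _))
    refine ⟨(E.symm : _ →ₗ[R] _) ∘ₗ g₀, ?_⟩
    apply LinearMap.ext; intro u
    have h1 := LinearMap.ext_iff.mp h₀ (E u)
    simpa using h1
  | h_empty =>
    intro κ _ F
    refine ⟨0, LinearMap.ext fun u => ?_⟩
    have hu : u = 0 := funext fun x => x.elim
    simp [hu]
  | h_option ih =>
    rename_i α _
    intro κ _ F
    classical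
    set inc := optIncl R α with hinc
    set f' : (α → R) →ₗ[R] (κ → R) := F ∘ₗ inc with hf'
    obtain ⟨g', hg'⟩ := ih κ f'
    have hfgf : ∀ a, f' (g' (f' a)) = f' a := fun a => by
      simpa using LinearMap.ext_iff.mp hg' a
    set δ : Option α → R := Pi.single none 1 with hδ
    set x : κ → R := F δ with hx
    set y : κ → R := x - f' (g' x) with hy
    obtain ⟨c, hc⟩ := vnr_unit' hvnr y
    set e : R := ∑ j, y j * c j with he
    have hey : e • y = y := funext fun k => hc k
    set t : (κ → R) →ₗ[R] R := (dotMap c) ∘ₗ (LinearMap.id - f' ∘ₗ g') with ht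
    have hty : ∀ w : κ → R, t w = dotMap c (w - f' (g' w)) := fun w => rfl
    refine ⟨inc ∘ₗ g' ∘ₗ (LinearMap.id - smulMap t x) + smulMap t δ, ?_⟩
    apply LinearMap.ext; intro u
    -- decomposition of u
    have hdec : u = inc (fun i => u (some i)) + u none • δ := by
      funext o
      cases o with
      | none => simp [hinc, optIncl, hδ]
      | some i => simp [hinc, optIncl, hδ, Pi.single_eq_of_ne (Option.some_ne_none i)]
    set p : α → R := fun i => u (some i) with hp
    set s : R := u none with hs
    have hw : F u = f' p + s • x := by
      conv_lhs => rw [hdec]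
      rw [map_add, map_smul, hf', hx]
      rfl
    have hfgx : f' (g' x) = x - y := by rw [hy]; abel
    have hFgu : f' (g' (F u)) = f' p + s • f' (g' x) := by
      rw [hw, map_add, map_add, map_smul, map_smul, hfgf]
    have htw : t (F u) = s * e := by
      rw [hty]
      have h1 : F u - f' (g' (F u)) = s • y := by
        rw [hFgu, hw, hfgx, hy, smul_sub, smul_sub]; abel
      rw [h1, map_smul, smul_eq_mul]
      rfl
    -- compute LHS
    simp only [LinearMap.comp_apply, LinearMap.add_apply, LinearMap.sub_apply,
      LinearMap.id_apply]
    show F (inc (g' (F u - smulMap t x (F u))) + smulMap t δ (F u)) = F u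
    have hsx : smulMap t x (F u) = (s * e) • x := by
      show t (F u) • x = _; rw [htw]
    have hsδ : smulMap t δ (F u) = (s * e) • δ := by
      show t (F u) • δ = _; rw [htw]
    rw [hsx, hsδ, map_add, map_smul]
    have hFinc : ∀ a : α → R, F (inc a) = f' a := fun a => rfl
    rw [hFinc, ← hx, map_sub, map_smul, map_sub, map_smul, hFgu, hfgx]
    -- goal: f' p + s • (x - y) - (s*e) • (x - y) + (s*e) • x = F u
    rw [hw]
    have hsey : (s * e) • y = s • y := by rw [mul_smul, hey]
    simp only [smul_sub]
    rw [hsey]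
    abel

lemma allFlatAux (hvnr : ∀ a : R, ∃ x : R, a * x * a = a)
    (n : ℕ) (r : Fin n → R) {M : Type v} [AddCommGroup M] [Module R M]
    (x : Fin n → M) (hx : (∑ i, r i • x i) = 0) :
    ∃ (a : Fin n → Fin n → R),
      (∀ i, x i = ∑ j, a i j • x j) ∧ ∀ j, (∑ i, r i * a i j) = 0 := by
  classical
  obtain ⟨d, hd⟩ := vnr_unit hvnr n r
  refine ⟨fun i j => (if i = j then 1 else 0) - d i * r j, fun i => ?_, fun j => ?_⟩
  · have h0 : ∑ j, ((if i = j then (1:R) else 0) - d i * r j) • x j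
        = (∑ j, (if i = j then (1:R) else 0) • x j) - ∑ j, (d i * r j) • x j := by
      rw [← Finset.sum_sub_distrib]
      exact Finset.sum_congr rfl fun j _ => sub_smul _ _ _
    have h1 : (∑ j, (if i = j then (1:R) else 0) • x j) = x i := by
      simp [ite_smul]
    have h2 : ∑ j, (d i * r j) • x j = d i • ∑ j, r j • x j := by
      rw [Finset.smul_sum]
      exact Finset.sum_congr rfl fun j _ => mul_smul _ _ _
    rw [h0, h1, h2, hx, smul_zero, sub_zero]
  · have h0 : ∑ i, r i * ((if i = j then (1:R) else 0) - d i * r j)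
        = (∑ i, r i * (if i = j then (1:R) else 0)) - ∑ i, (r i * d i) * r j := by
      rw [← Finset.sum_sub_distrib]
      refine Finset.sum_congr rfl fun i _ => ?_
      rw [mul_sub, mul_assoc]
    have h1 : (∑ i, r i * (if i = j then (1:R) else 0)) = r j := by
      simp [mul_ite]
    rw [h0, h1, ← Finset.sum_mul, hd j, sub_self]

lemma allFlat (hvnr : ∀ a : R, ∃ x : R, a * x * a = a) (M : Type u)
    [AddCommGroup M] [Module R M] : FlatModule R M := by
  intro n r x hx
  obtain ⟨a, h1, h2⟩ := allFlatAux hvnr n r x hx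
  exact ⟨n, a, x, h1, h2⟩




lemma pure_of_vnr (hvnr : ∀ a : R, ∃ x : R, a * x * a = a) {N M : Type u}
    [AddCommGroup N] [Module R N] [AddCommGroup M] [Module R M] (ν : N →ₗ[R] M) :
    IsPureMono R ν := by
  intro C _ _ hC h
  classical
  haveI := hC
  obtain ⟨n, p, hp⟩ := Module.Finite.exists_fin' R C
  obtain ⟨S, hS⟩ := Module.FinitePresentation.fg_ker p hp
  let f : (↥S → R) →ₗ[R] (Fin n → R) := combo (fun i : ↥S => (i : Fin n → R))
  obtain ⟨g, hg⟩ := mapReg hvnr ↥S (Fin n) f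
  have hfgf : ∀ a, f (g (f a)) = f a := fun a => by
    simpa using LinearMap.ext_iff.mp hg a
  have hrange : LinearMap.range f = LinearMap.ker p := by
    rw [range_combo, Subtype.range_coe_subtype, Finset.setOf_mem]
    exact hS
  -- lifts of images of the standard basis
  have hsur := Submodule.mkQ_surjective (LinearMap.range ν)
  choose m hm using fun j : Fin n => hsur (h (p (Pi.single j 1)))
  let Φ : (Fin n → R) →ₗ[R] M := combo m
  have hΦ : (LinearMap.range ν).mkQ ∘ₗ Φ = h ∘ₗ p := by
    apply Module.Basis.ext (Pi.basisFun R (Fin n))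
    intro j
    simp only [LinearMap.comp_apply, Pi.basisFun_apply]
    have hcs : Φ (Pi.single j (1 : R)) = m j := combo_single (R := R) m j
    rw [hcs]
    exact hm j
  have hΦ' : ∀ v, (LinearMap.range ν).mkQ (Φ v) = h (p v) := fun v =>
    LinearMap.ext_iff.mp hΦ v
  let Ψ : (Fin n → R) →ₗ[R] M := Φ ∘ₗ (LinearMap.id - f ∘ₗ g)
  have hΨ : ∀ v, Ψ v = Φ (v - f (g v)) := fun v => rfl
  have hker : LinearMap.ker p ≤ LinearMap.ker Ψ := by
    intro v hv
    rw [← hrange] at hv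
    obtain ⟨a, rfl⟩ := hv
    rw [LinearMap.mem_ker, hΨ, hfgf, sub_self, map_zero]
  let e2 := p.quotKerEquivOfSurjective hp
  refine ⟨((LinearMap.ker p).liftQ Ψ hker) ∘ₗ (e2.symm : C →ₗ[R] _), ?_⟩
  apply LinearMap.ext
  intro cc
  obtain ⟨v, rfl⟩ := hp cc
  have he2 : e2 (Submodule.Quotient.mk v) = p v := by
    simp [e2, LinearMap.quotKerEquivOfSurjective]
  have hsymm : e2.symm (p v) = Submodule.Quotient.mk v := by
    rw [← he2, LinearEquiv.symm_apply_apply]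
  simp only [LinearMap.comp_apply, LinearEquiv.coe_coe, hsymm, Submodule.liftQ_apply]
  have hpf : p (f (g v)) = 0 := by
    have : f (g v) ∈ LinearMap.ker p := hrange ▸ LinearMap.mem_range_self f (g v)
    exact LinearMap.mem_ker.mp this
  rw [hΨ, hΦ', map_sub, hpf, sub_zero]


lemma cotorsion_to_injective (hvnr : ∀ a : R, ∃ x : R, a * x * a = a)
    (M : ModuleCat.{u} R) (hM : Cotorsion R ↥M) : Module.Injective R ↥M := by
  haveI : CategoryTheory.EnoughInjectives (ModuleCat.{u} R) := inferInstance
  set Q := CategoryTheory.Injective.under M with hQ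
  set ι : M ⟶ Q := CategoryTheory.Injective.ι M with hι
  haveI : CategoryTheory.Injective (ModuleCat.of R ↥Q) :=
    inferInstanceAs (CategoryTheory.Injective Q)
  have injQ : Module.Injective R ↥Q := Module.injective_module_of_injective_object R ↥Q
  have hinj : Function.Injective ι := (ModuleCat.mono_iff_injective ι).mp inferInstance
  let ιl : ↥M →ₗ[R] ↥Q := ι.hom
  set Nr := LinearMap.range ιl with hNr
  let F : ModuleCat.{u} R := ModuleCat.of R (↥Q ⧸ Nr)
  obtain ⟨s, hs⟩ := hM F (allFlat hvnr _) ↥Q ιl Nr.mkQ hinj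
    (Submodule.mkQ_surjective Nr) (Submodule.ker_mkQ Nr).symm
  have hsm : ∀ q : ↥Q, Nr.mkQ (q - s (Nr.mkQ q)) = 0 := fun q => by
    have h1 := LinearMap.ext_iff.mp hs (Nr.mkQ q)
    simp only [LinearMap.comp_apply, LinearMap.id_apply] at h1
    rw [map_sub]
    exact sub_eq_zero_of_eq h1.symm
  have hmem : ∀ q : ↥Q, q - s (Nr.mkQ q) ∈ Nr := fun q => by
    have h2 := hsm q
    rw [map_sub, Submodule.mkQ_apply, Submodule.mkQ_apply, ← Submodule.Quotient.mk_sub,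
      Submodule.Quotient.mk_eq_zero] at h2
    exact h2
  let k' : ↥Q →ₗ[R] ↥Nr := (LinearMap.id - s ∘ₗ Nr.mkQ).codRestrict Nr (fun q => hmem q)
  let eqv : ↥M ≃ₗ[R] ↥Nr := LinearEquiv.ofInjective ιl hinj
  let ret : ↥Q →ₗ[R] ↥M := (eqv.symm : ↥Nr →ₗ[R] ↥M) ∘ₗ k'
  have hret : ∀ m0 : ↥M, ret (ιl m0) = m0 := by
    intro m0
    have h1 : Nr.mkQ (ιl m0) = 0 := by
      rw [Submodule.mkQ_apply]
      exact (Submodule.Quotient.mk_eq_zero Nr).mpr (LinearMap.mem_range_self ιl m0)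
    have h2 : k' (ιl m0) = eqv m0 := by
      apply Subtype.ext
      have hco : (k' (ιl m0) : ↥Q) = ιl m0 - s (Nr.mkQ (ιl m0)) := rfl
      rw [hco, h1, map_zero, sub_zero]
      exact (LinearEquiv.ofInjective_apply ιl m0).symm
    show eqv.symm (k' (ιl m0)) = m0
    rw [h2, LinearEquiv.symm_apply_apply]
  constructor
  intro X Y _ _ _ _ fz hfz gz
  obtain ⟨hbig, hh⟩ := injQ.out fz hfz (ιl ∘ₗ gz)
  refine ⟨ret ∘ₗ hbig, fun x => ?_⟩
  rw [LinearMap.comp_apply, hh x, LinearMap.comp_apply]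
  exact hret (gz x)

lemma injective_to_cotorsion (M : ModuleCat.{u} R) (hM : Module.Injective R ↥M) :
    Cotorsion R ↥M := by
  intro F _ E _ _ ι π hι hπ hr
  obtain ⟨r, hr'⟩ := hM.out ι hι LinearMap.id
  have hπι : ∀ m, π (ι m) = 0 := fun m => by
    have : ι m ∈ LinearMap.ker π := hr ▸ LinearMap.mem_range_self ι m
    exact LinearMap.mem_ker.mp this
  have hker : LinearMap.ker π ≤ LinearMap.ker (LinearMap.id - ι ∘ₗ r) := by
    intro x hx
    rw [← hr] at hx
    obtain ⟨m, rfl⟩ := hx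
    have hm : r (ι m) = m := by simpa using hr' m
    simp [LinearMap.mem_ker, hm]
  let e2 := π.quotKerEquivOfSurjective hπ
  refine ⟨((LinearMap.ker π).liftQ (LinearMap.id - ι ∘ₗ r) hker) ∘ₗ (e2.symm : ↥F →ₗ[R] _), ?_⟩
  apply LinearMap.ext; intro a
  obtain ⟨x, rfl⟩ := hπ a
  have he2 : e2 (Submodule.Quotient.mk x) = π x := by
    simp [e2, LinearMap.quotKerEquivOfSurjective]
  have hsymm : e2.symm (π x) = Submodule.Quotient.mk x := by
    rw [← he2, LinearEquiv.symm_apply_apply]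
  simp only [LinearMap.comp_apply, LinearEquiv.coe_coe, hsymm, Submodule.liftQ_apply,
    LinearMap.id_apply, LinearMap.sub_apply, map_sub]
  rw [hπι (r x), sub_zero]

lemma pi_iff_inj (hvnr : ∀ a : R, ∃ x : R, a * x * a = a) (L : ModuleCat.{u} R) :
    PureInjective R ↥L ↔ Module.Injective R ↥L := by
  constructor
  · intro hPI
    constructor
    intro X Y _ _ _ _ fz hfz gz
    obtain ⟨g, hg⟩ := hPI X Y fz hfz (pure_of_vnr hvnr fz) gz
    refine ⟨g, fun x => ?_⟩
    have := LinearMap.ext_iff.mp hg x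
    simpa using this
  · intro hI N M' _ _ _ _ ν hν _ fz
    obtain ⟨g, hg⟩ := hI.out ν hν fz
    exact ⟨g, LinearMap.ext hg⟩

end Aux

/-- Over a countable von Neumann regular ring which is not semisimple, every cotorsion
module is injective; consequently the classes of cotorsion, pure-injective and
injective modules coincide. -/
theorem vnr_cotorsion_eq_injective (R : Type u) [Ring R] [Countable R]
    (hvnr : ∀ a : R, ∃ x : R, a * x * a = a)
    (hnss : ¬ ∀ M : ModuleCat.{u} R, Module.Projective R ↥M) :
    (∀ M : ModuleCat.{u} R, Cotorsion R ↥M → Module.Injective R ↥M) ∧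
    (∀ M : ModuleCat.{u} R, Cotorsion R ↥M ↔ Module.Injective R ↥M) ∧
    (∀ M : ModuleCat.{u} R, PureInjective R ↥M ↔ Module.Injective R ↥M) := by
  refine ⟨fun M hM => cotorsion_to_injective hvnr M hM,
    fun M => ⟨fun hM => cotorsion_to_injective hvnr M hM,
      fun hI => injective_to_cotorsion M hI⟩,
    fun M => pi_iff_inj hvnr M⟩
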